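/- In the symbolic optimization for Hausdorff measure of a self-affine-type Cantor set: if a covering R of X by cylinders of generation ≤ n minimizes ∑_{I ∈ R} (diam I)^h among all such coverings and has minimal cardinality, and all ratios diam(IJ)/diam(I) depend only on the word J (not on I), then R consists of all cylinders of a single generation. -/

import Mathlib

open scoped BigOperators

/-- A finite family of cylinders (words over `Fin N`) of generation `≤ n`
covering the full shift: every infinite sequence has a prefix in the family. -/
def IsCylinderCover (N n : ℕ) (R : Finset (List (Fin N))) : Prop :=
  (∀ I ∈ R, I.length ≤ n) ∧
    ∀ x : ℕ → Fin N, ∃ I ∈ R, I = List.ofFn (fun k : Fin I.length => x k)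

namespace OptCoverAux

/-- all words of length `m` -/
def gen (N m : ℕ) : Finset (List (Fin N)) :=
  (Finset.univ : Finset (Fin m → Fin N)).image List.ofFn

lemma mem_gen {N m : ℕ} {W : List (Fin N)} : W ∈ gen N m ↔ W.length = m := by
  constructor
  · intro hW
    rw [gen, Finset.mem_image] at hW
    obtain ⟨v, -, rfl⟩ := hW
    simp
  · intro hW
    subst hW
    rw [gen, Finset.mem_image]
    exact ⟨fun k => W.get k, Finset.mem_univ _, List.ofFn_get W⟩

lemma card_gen (N m : ℕ) : (gen N m).card = N ^ m := by
  rw [gen, Finset.card_image_of_injective _ List.ofFn_injective, Finset.card_univ]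
  simp

lemma gen_nonempty {N m : ℕ} (z : Fin N) : (gen N m).Nonempty :=
  ⟨List.replicate m z, mem_gen.mpr (by simp)⟩

def pref {N : ℕ} (x : ℕ → Fin N) (m : ℕ) : List (Fin N) :=
  List.ofFn (fun k : Fin m => x k)

@[simp] lemma pref_length {N : ℕ} (x : ℕ → Fin N) (m : ℕ) : (pref x m).length = m := by
  simp [pref]

lemma pref_self_length {N : ℕ} (x : ℕ → Fin N) (m : ℕ) :
    pref x ((pref x m).length) = pref x m := by rw [pref_length]

lemma pref_add {N : ℕ} (x : ℕ → Fin N) (a b : ℕ) :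
    pref x (a + b) = pref x a ++ List.ofFn (fun k : Fin b => x (a + k)) := by
  unfold pref
  rw [List.ofFn_add]
  congr 1

lemma pref_prefix {N : ℕ} (x : ℕ → Fin N) {a b : ℕ} (hab : a ≤ b) :
    pref x a <+: pref x b := by
  rw [show b = a + (b - a) by omega, pref_add]
  exact List.prefix_append _ _

lemma prefix_pref {N : ℕ} {x : ℕ → Fin N} {m : ℕ} {I : List (Fin N)}
    (hI : I <+: pref x m) : I = pref x I.length := by
  have hlen : I.length ≤ m := by have := hI.length_le; simpa using this
  apply List.ext_getElem (by simp)
  intro k hk hk'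
  have hkm : k < m := by omega
  have := hI.getElem hk
  rw [this]
  simp [pref]

def wseq {N : ℕ} (z : Fin N) (W : List (Fin N)) : ℕ → Fin N := fun k => W.getD k z

lemma pref_wseq {N : ℕ} (z : Fin N) (W : List (Fin N)) {m : ℕ} (hm : m ≤ W.length) :
    pref (wseq z W) m = W.take m := by
  apply List.ext_getElem (by simp; omega)
  intro k hk hk'
  simp only [pref, List.getElem_ofFn, List.getElem_take]
  have hkW : k < W.length := by simp at hk; omega
  simp [wseq, List.getD, List.getElem?_eq_getElem hkW]

lemma sum_gen {N m : ℕ} (f : List (Fin N) → ℝ) :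
    ∑ V ∈ gen N m, f V = ∑ v : Fin m → Fin N, f (List.ofFn v) := by
  rw [gen, Finset.sum_image (fun a _ b _ hab => List.ofFn_injective hab)]

lemma sum_gen_succ {N : ℕ} (d : ℕ) (f : List (Fin N) → ℝ) :
    ∑ V ∈ gen N (d + 1), f V = ∑ j : Fin N, ∑ V ∈ gen N d, f (j :: V) := by
  rw [sum_gen]
  have h1 : ∀ v : Fin (d+1) → Fin N, f (List.ofFn v)
      = f (v 0 :: List.ofFn (fun i : Fin d => v i.succ)) := by
    intro v; rw [List.ofFn_succ]
  calc ∑ v : Fin (d+1) → Fin N, f (List.ofFn v)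
      = ∑ p : Fin N × (Fin d → Fin N), f (List.ofFn (Fin.cons p.1 p.2)) := by
        refine (Fintype.sum_equiv (Fin.consEquiv (fun _ : Fin (d+1) => Fin N)) _ _ ?_).symm
        intro p; rfl
    _ = ∑ j : Fin N, ∑ v : Fin d → Fin N, f (j :: List.ofFn v) := by
        rw [Fintype.sum_prod_type]
        refine Finset.sum_congr rfl fun j _ => Finset.sum_congr rfl fun v _ => ?_
        rw [h1]
        simp [Fin.cons_zero, Fin.cons_succ]
    _ = ∑ j : Fin N, ∑ V ∈ gen N d, f (j :: V) := by
        refine Finset.sum_congr rfl fun j _ => ?_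
        rw [sum_gen]

lemma sum_gen_one {N : ℕ} (f : List (Fin N) → ℝ) :
    ∑ V ∈ gen N 1, f V = ∑ j : Fin N, f [j] := by
  rw [sum_gen_succ]
  refine Finset.sum_congr rfl fun j _ => ?_
  rw [show gen N 0 = {([] : List (Fin N))} from ?_]
  · simp
  · ext W; simp [mem_gen, List.length_eq_zero_iff]

lemma sum_union_le {α : Type*} [DecidableEq α] {A B : Finset α} {f : α → ℝ}
    (hf : ∀ a, 0 ≤ f a) :
    ∑ x ∈ A ∪ B, f x ≤ ∑ x ∈ A, f x + ∑ x ∈ B, f x := by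
  have h1 : ∑ x ∈ A ∪ B, f x + ∑ x ∈ A ∩ B, f x = ∑ x ∈ A, f x + ∑ x ∈ B, f x :=
    Finset.sum_union_inter
  have h2 : 0 ≤ ∑ x ∈ A ∩ B, f x := Finset.sum_nonneg fun i _ => hf i
  linarith

section Sig
variable {N : ℕ} (D : List (Fin N) → ℝ) (h : ℝ) (z : Fin N)

noncomputable def TT (k d : ℕ) : ℝ := ∑ V ∈ gen N d, D (List.replicate k z ++ V) ^ h

noncomputable def sig (k d : ℕ) : ℝ := TT D h z k d / D (List.replicate k z) ^ h

noncomputable def gg (n k : ℕ) : ℝ :=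
  if hk : 1 ≤ n - k then
    (Finset.Icc 1 (n - k)).inf' ⟨1, Finset.mem_Icc.mpr ⟨le_refl 1, hk⟩⟩ (sig D h z k)
  else 1

lemma ratio_pow (hDpos : ∀ I, 0 < D I)
    (hDratio : ∀ I I' J : List (Fin N), I.length = I'.length →
      D (I ++ J) * D I' = D (I' ++ J) * D I) (W V : List (Fin N)) :
    D (W ++ V) ^ h * D (List.replicate W.length z) ^ h
      = D (List.replicate W.length z ++ V) ^ h * D W ^ h := by
  have h0 := hDratio W (List.replicate W.length z) V (by simp)
  have h1 : (D (W ++ V) * D (List.replicate W.length z)) ^ h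
      = (D (List.replicate W.length z ++ V) * D W) ^ h := by rw [h0]
  rwa [Real.mul_rpow (hDpos _).le (hDpos _).le,
    Real.mul_rpow (hDpos _).le (hDpos _).le] at h1

lemma sum_gen_append (hDpos : ∀ I, 0 < D I)
    (hDratio : ∀ I I' J : List (Fin N), I.length = I'.length →
      D (I ++ J) * D I' = D (I' ++ J) * D I) (W : List (Fin N)) (d : ℕ) :
    ∑ V ∈ gen N d, D (W ++ V) ^ h = sig D h z W.length d * D W ^ h := by
  have hE : (0:ℝ) < D (List.replicate W.length z) ^ h :=
    Real.rpow_pos_of_pos (hDpos _) h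
  rw [sig, TT, div_mul_eq_mul_div, eq_div_iff hE.ne']
  rw [Finset.sum_mul, Finset.sum_mul]
  exact Finset.sum_congr rfl fun V _ => ratio_pow D h z hDpos hDratio W V

lemma sig_pos (hDpos : ∀ I, 0 < D I) (k d : ℕ) : 0 < sig D h z k d := by
  apply div_pos
  · exact Finset.sum_pos (fun i _ => Real.rpow_pos_of_pos (hDpos _) h) (gen_nonempty z)
  · exact Real.rpow_pos_of_pos (hDpos _) h

lemma sig_chain (hDpos : ∀ I, 0 < D I)
    (hDratio : ∀ I I' J : List (Fin N), I.length = I'.length →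
      D (I ++ J) * D I' = D (I' ++ J) * D I) (k d : ℕ) :
    sig D h z k (d + 1) = sig D h z k 1 * sig D h z (k + 1) d := by
  have hE : (0:ℝ) < D (List.replicate k z) ^ h := Real.rpow_pos_of_pos (hDpos _) h
  have h1 : TT D h z k (d + 1) = sig D h z (k + 1) d * TT D h z k 1 := by
    rw [TT, sum_gen_succ]
    have key : ∀ j : Fin N, ∑ V ∈ gen N d, D (List.replicate k z ++ (j :: V)) ^ h
        = sig D h z (k + 1) d * D (List.replicate k z ++ [j]) ^ h := by
      intro j
      have h2 := sum_gen_append D h z hDpos hDratio (List.replicate k z ++ [j]) d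
      simp only [List.length_append, List.length_replicate, List.length_singleton] at h2
      rw [← h2]
      refine Finset.sum_congr rfl fun V _ => ?_
      rw [List.append_cons]
    rw [Finset.sum_congr rfl (fun j _ => key j), ← Finset.mul_sum]
    congr 1
    rw [TT, sum_gen_one]
  rw [sig, h1, sig, sig]
  field_simp

lemma gg_le {n k : ℕ} (hk : k < n) {d : ℕ} (h1 : 1 ≤ d) (h2 : d ≤ n - k) :
    gg D h z n k ≤ sig D h z k d := by
  rw [gg, dif_pos (show 1 ≤ n - k by omega)]
  exact Finset.inf'_le _ (Finset.mem_Icc.mpr ⟨h1, h2⟩)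

lemma gg_attain {n k : ℕ} (hk : k < n) :
    ∃ d, 1 ≤ d ∧ d ≤ n - k ∧ gg D h z n k = sig D h z k d := by
  rw [gg, dif_pos (show 1 ≤ n - k by omega)]
  obtain ⟨d, hd, hval⟩ := Finset.exists_mem_eq_inf'
    (⟨1, Finset.mem_Icc.mpr ⟨le_refl 1, show 1 ≤ n - k by omega⟩⟩ :
      (Finset.Icc 1 (n - k)).Nonempty) (sig D h z k)
  rw [Finset.mem_Icc] at hd
  exact ⟨d, hd.1, hd.2, hval⟩

end Sig
end OptCoverAux

open OptCoverAux in
theorem optimal_cover_is_a_generation (N : ℕ) (hN : 2 ≤ N) (n : ℕ)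
    (D : List (Fin N) → ℝ) (hDpos : ∀ I, 0 < D I)
    (hDratio : ∀ I I' J : List (Fin N), I.length = I'.length →
      D (I ++ J) * D I' = D (I' ++ J) * D I)
    (h : ℝ) (hh : 0 < h)
    (R : Finset (List (Fin N))) (hR : IsCylinderCover N n R)
    (hopt : ∀ R' : Finset (List (Fin N)), IsCylinderCover N n R' →
      ∑ I ∈ R, D I ^ h ≤ ∑ I ∈ R', D I ^ h)
    (hcard : ∀ R' : Finset (List (Fin N)), IsCylinderCover N n R' →
      ∑ I ∈ R', D I ^ h = ∑ I ∈ R, D I ^ h → R.card ≤ R'.card) :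
    ∃ m ≤ n, R = (Finset.univ : Finset (Fin m → Fin N)).image List.ofFn := by
  classical
  obtain ⟨hRlen, hRcov⟩ := hR
  set z : Fin N := ⟨0, by omega⟩ with hzdef
  have hcov : ∀ x : ℕ → Fin N, ∃ I ∈ R, I = pref x I.length := hRcov
  -- prefix-freeness
  have hPF : ∀ I ∈ R, ∀ J ∈ R, I <+: J → I = J := by
    intro I hI J hJ hpre
    by_contra hne
    have hcov' : IsCylinderCover N n (R.erase J) := by
      constructor
      · intro K hK; exact hRlen K (Finset.mem_of_mem_erase hK)
      · intro x
        obtain ⟨K, hKR, hKeq⟩ := hcov x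
        by_cases hKJ : K = J
        · refine ⟨I, Finset.mem_erase.mpr ⟨hne, hI⟩, ?_⟩
          have h1 : I <+: pref x K.length := by
            rw [← hKeq, hKJ]; exact hpre
          exact prefix_pref h1
        · exact ⟨K, Finset.mem_erase.mpr ⟨hKJ, hKR⟩, hKeq⟩
    have hsum := hopt _ hcov'
    have h2 : ∑ I ∈ R.erase J, D I ^ h + D J ^ h = ∑ I ∈ R, D I ^ h :=
      Finset.sum_erase_add R _ hJ
    have hJpos : 0 < D J ^ h := Real.rpow_pos_of_pos (hDpos J) h
    linarith
  -- basic structure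
  obtain ⟨I0, hI0R, -⟩ := hcov (fun _ => z)
  have hRne : R.Nonempty := ⟨I0, hI0R⟩
  have hlensne : (R.image List.length).Nonempty := hRne.image _
  set m₀ := (R.image List.length).min' hlensne with hm₀def
  obtain ⟨Q, hQR, hQlen⟩ : ∃ Q ∈ R, Q.length = m₀ := by
    obtain ⟨l, hl, hleq⟩ := Finset.mem_image.mp ((R.image List.length).min'_mem hlensne)
    exact ⟨l, hl, hleq⟩
  have hmin : ∀ I ∈ R, m₀ ≤ I.length := fun I hI =>
    Finset.min'_le _ _ (Finset.mem_image_of_mem _ hI)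
  have hm₀n : m₀ ≤ n := hQlen ▸ hRlen Q hQR
  have hgencov : ∀ m, m ≤ n → IsCylinderCover N n (gen N m) := by
    intro m hm
    constructor
    · intro I hI; rw [mem_gen] at hI; omega
    · intro x
      refine ⟨pref x m, mem_gen.mpr (by simp), ?_⟩
      exact (pref_self_length x m).symm
  -- all lengths are equal to m₀
  have hall : ∀ I ∈ R, I.length = m₀ := by
    by_contra hcon
    push_neg at hcon
    obtain ⟨I₁, hI₁R, hI₁ne⟩ := hcon
    have hI₁gt : m₀ < I₁.length := lt_of_le_of_ne (hmin _ hI₁R) (Ne.symm hI₁ne)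
    have hm₀ltn : m₀ < n := lt_of_lt_of_le hI₁gt (hRlen _ hI₁R)
    -- internal words are short
    have hIntLt : ∀ W : List (Fin N), (∀ I ∈ R, ¬ I <+: W) → W.length < n := by
      intro W hint
      obtain ⟨K, hKR, hKeq⟩ := hcov (wseq z W)
      by_contra hcon2
      push_neg at hcon2
      apply hint K hKR
      have h1 : K <+: pref (wseq z W) W.length := by
        rw [hKeq]
        exact pref_prefix _ (le_trans (hRlen K hKR) hcon2)
      rwa [pref_wseq z W (le_refl W.length), List.take_length] at h1
    -- splitting the minimal word: sig m₀ d ≥ 1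
    have hsig1 : ∀ d, 1 ≤ d → d ≤ n - m₀ → 1 ≤ sig D h z m₀ d := by
      intro d hd1 hd2
      set R' := (R.erase Q) ∪ (gen N d).image (fun V => Q ++ V) with hR'def
      have himg_len : ∀ I ∈ (gen N d).image (fun V => Q ++ V), I.length = m₀ + d := by
        intro I hI
        obtain ⟨V, hV, rfl⟩ := Finset.mem_image.mp hI
        rw [mem_gen] at hV
        simp [hQlen, hV]
      have hcov' : IsCylinderCover N n R' := by
        constructor
        · intro I hI
          rcases Finset.mem_union.mp hI with hI | hI
          · exact hRlen I (Finset.mem_of_mem_erase hI)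
          · rw [himg_len I hI]; omega
        · intro x
          obtain ⟨K, hKR, hKeq⟩ := hcov x
          by_cases hKQ : K = Q
          · refine ⟨pref x (m₀ + d), Finset.mem_union_right _ ?_, ?_⟩
            · rw [Finset.mem_image]
              refine ⟨List.ofFn (fun k : Fin d => x (m₀ + k)), mem_gen.mpr (by simp), ?_⟩
              rw [pref_add]
              congr 1
              rw [← hQlen]
              rw [hKQ] at hKeq
              exact hKeq
            · exact (pref_self_length x (m₀ + d)).symm
          · exact ⟨K, Finset.mem_union_left _ (Finset.mem_erase.mpr ⟨hKQ, hKR⟩), hKeq⟩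
      have hsum := hopt R' hcov'
      have hle2 : ∑ I ∈ R', D I ^ h
          ≤ (∑ I ∈ R.erase Q, D I ^ h) + ∑ I ∈ (gen N d).image (fun V => Q ++ V), D I ^ h :=
        sum_union_le (fun a => (Real.rpow_pos_of_pos (hDpos a) h).le)
      have himg : ∑ I ∈ (gen N d).image (fun V => Q ++ V), D I ^ h
          = sig D h z m₀ d * D Q ^ h := by
        rw [Finset.sum_image (fun a _ b _ hab => by simpa using hab)]
        rw [← hQlen]
        exact sum_gen_append D h z hDpos hDratio Q d
      have herase : ∑ I ∈ R.erase Q, D I ^ h = (∑ I ∈ R, D I ^ h) - D Q ^ h := by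
        have := Finset.sum_erase_add R (fun I => D I ^ h) hQR
        linarith
      have hQpos : 0 < D Q ^ h := Real.rpow_pos_of_pos (hDpos Q) h
      have h3 : 1 * D Q ^ h ≤ sig D h z m₀ d * D Q ^ h := by
        rw [one_mul]; linarith
      exact le_of_mul_le_mul_right h3 hQpos
    have hgg1 : 1 ≤ gg D h z n m₀ := by
      obtain ⟨d, hd1, hd2, heq⟩ := gg_attain D h z hm₀ltn
      rw [heq]; exact hsig1 d hd1 hd2
    -- dichotomy for children of internal nodes
    have hdichot : ∀ (W : List (Fin N)) (j : Fin N), (∀ I ∈ R, ¬ I <+: W) →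
        (W ++ [j]) ∈ R ∨ (∀ I ∈ R, ¬ I <+: (W ++ [j])) := by
      intro W j hint
      by_cases hWj : (W ++ [j]) ∈ R
      · exact Or.inl hWj
      · refine Or.inr fun I hIR hpre => ?_
        have hlen := hpre.length_le
        simp only [List.length_append, List.length_singleton] at hlen
        by_cases hIl : I.length ≤ W.length
        · apply hint I hIR
          have h1 : I = (W ++ [j]).take I.length := List.prefix_iff_eq_take.mp hpre
          rw [List.take_append_of_le_length hIl] at h1
          exact h1 ▸ List.take_prefix _ _
        · have h1 : I = W ++ [j] := List.IsPrefix.eq_of_length hpre (by simp; omega)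
          exact hWj (h1 ▸ hIR)
    have hleaf : ∀ K ∈ R, ∑ I ∈ R.filter (fun I => K <+: I), D I ^ h = D K ^ h := by
      intro K hK
      have h1 : R.filter (fun I => K <+: I) = {K} := by
        ext I
        simp only [Finset.mem_filter, Finset.mem_singleton]
        constructor
        · rintro ⟨hIR, hpre⟩; exact (hPF K hK I hIR hpre).symm
        · rintro rfl; exact ⟨hK, List.prefix_refl _⟩
      rw [h1, Finset.sum_singleton]
    have hchildsum : ∀ W : List (Fin N),
        ∑ j : Fin N, D (W ++ [j]) ^ h = sig D h z W.length 1 * D W ^ h := by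
      intro W
      have hso : ∑ V ∈ gen N 1, D (W ++ V) ^ h = ∑ j : Fin N, D (W ++ [j]) ^ h :=
        sum_gen_one (fun V => D (W ++ V) ^ h)
      rw [← hso]
      exact sum_gen_append D h z hDpos hDratio W 1
    -- the key induction over internal nodes
    have claimC : ∀ t (W : List (Fin N)), n - W.length ≤ t → (∀ I ∈ R, ¬ I <+: W) →
        D W ^ h * gg D h z n W.length ≤ ∑ I ∈ R.filter (fun I => W <+: I), D I ^ h := by
      intro t
      induction t with
      | zero => intro W ht hint; exact absurd (hIntLt W hint) (by omega)
      | succ t ih =>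
        intro W ht hint
        have hWn : W.length < n := hIntLt W hint
        have hWnotR : W ∉ R := fun hW => hint W hW (List.prefix_refl W)
        have hpart : R.filter (fun I => W <+: I)
            = Finset.univ.biUnion (fun j : Fin N => R.filter (fun I => (W ++ [j]) <+: I)) := by
          ext I
          simp only [Finset.mem_filter, Finset.mem_biUnion, Finset.mem_univ, true_and]
          constructor
          · rintro ⟨hIR, rest, rfl⟩
            cases rest with
            | nil => exact absurd (by simpa using hIR) hWnotR
            | cons j tail =>
              exact ⟨j, by simpa using hIR, ⟨tail, (List.append_cons W j tail).symm⟩⟩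
          · rintro ⟨j, hIR, hpre⟩
            exact ⟨hIR, (List.prefix_append W [j]).trans hpre⟩
        have hdisj : ((Finset.univ : Finset (Fin N)) : Set (Fin N)).PairwiseDisjoint
            (fun j => R.filter (fun I => (W ++ [j]) <+: I)) := by
          intro j _ j' _ hjj'
          refine Finset.disjoint_left.mpr fun I hI hI' => ?_
          rw [Finset.mem_filter] at hI hI'
          have e1 : W ++ [j] = I.take (W.length + 1) := by
            have := List.prefix_iff_eq_take.mp hI.2; simpa using this
          have e2 : W ++ [j'] = I.take (W.length + 1) := by
            have := List.prefix_iff_eq_take.mp hI'.2; simpa using this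
          apply hjj'
          have h3 : W ++ [j] = W ++ [j'] := by rw [e1, ← e2]
          simpa using h3
        rw [hpart, Finset.sum_biUnion hdisj]
        rcases eq_or_lt_of_le (show W.length + 1 ≤ n by omega) with hn1 | hn1
        · -- boundary level: all children are in R
          have hch : ∀ j : Fin N, (W ++ [j]) ∈ R := by
            intro j
            rcases hdichot W j hint with hj | hj
            · exact hj
            · have h4 := hIntLt _ hj
              simp only [List.length_append, List.length_singleton] at h4
              omega
          calc D W ^ h * gg D h z n W.length
              ≤ D W ^ h * sig D h z W.length 1 := by
                exact mul_le_mul_of_nonneg_left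
                  (gg_le D h z hWn (le_refl 1) (by omega))
                  (Real.rpow_pos_of_pos (hDpos W) h).le
            _ = ∑ j : Fin N, D (W ++ [j]) ^ h := by rw [hchildsum W]; ring
            _ = ∑ j : Fin N, ∑ I ∈ R.filter (fun I => (W ++ [j]) <+: I), D I ^ h :=
                Finset.sum_congr rfl fun j _ => (hleaf _ (hch j)).symm
        · -- interior level
          set c := min 1 (gg D h z n (W.length + 1)) with hcdef
          have hc1 : c ≤ 1 := min_le_left _ _
          have hkey : D W ^ h * gg D h z n W.length
              ≤ c * (sig D h z W.length 1 * D W ^ h) := by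
            rcases le_total 1 (gg D h z n (W.length + 1)) with hge | hle
            · rw [hcdef, min_eq_left hge, one_mul]
              have h5 := gg_le D h z hWn (le_refl 1) (show 1 ≤ n - W.length by omega)
              rw [mul_comm]
              exact mul_le_mul_of_nonneg_right h5 (Real.rpow_pos_of_pos (hDpos W) h).le
            · rw [hcdef, min_eq_right hle]
              obtain ⟨d, hd1, hd2, heq⟩ := gg_attain D h z (show W.length + 1 < n from hn1)
              rw [heq]
              have hchain := sig_chain D h z hDpos hDratio W.length d
              have hgle := gg_le D h z hWn (show 1 ≤ d + 1 by omega)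
                (show d + 1 ≤ n - W.length by omega)
              rw [hchain] at hgle
              rw [mul_comm (D W ^ h)]
              calc gg D h z n W.length * D W ^ h
                  ≤ (sig D h z W.length 1 * sig D h z (W.length + 1) d) * D W ^ h :=
                    mul_le_mul_of_nonneg_right hgle (Real.rpow_pos_of_pos (hDpos W) h).le
                _ = sig D h z (W.length + 1) d * (sig D h z W.length 1 * D W ^ h) := by ring
          calc D W ^ h * gg D h z n W.length
              ≤ c * (sig D h z W.length 1 * D W ^ h) := hkey
            _ = ∑ j : Fin N, c * D (W ++ [j]) ^ h := by
                rw [← hchildsum W, Finset.mul_sum]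
            _ ≤ ∑ j : Fin N, ∑ I ∈ R.filter (fun I => (W ++ [j]) <+: I), D I ^ h := by
                refine Finset.sum_le_sum fun j _ => ?_
                rcases hdichot W j hint with hj | hj
                · rw [hleaf _ hj]
                  exact mul_le_of_le_one_left (Real.rpow_pos_of_pos (hDpos _) h).le hc1
                · have hlen' : (W ++ [j]).length = W.length + 1 := by simp
                  have hih := ih (W ++ [j]) (by rw [hlen']; omega) hj
                  rw [hlen'] at hih
                  calc c * D (W ++ [j]) ^ h
                      ≤ gg D h z n (W.length + 1) * D (W ++ [j]) ^ h :=
                        mul_le_mul_of_nonneg_right (min_le_right _ _)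
                          (Real.rpow_pos_of_pos (hDpos _) h).le
                    _ = D (W ++ [j]) ^ h * gg D h z n (W.length + 1) := by ring
                    _ ≤ _ := hih
    -- level m₀ decomposition
    set BI := (gen N m₀).filter (fun W => ∀ I ∈ R, ¬ I <+: W) with hBIdef
    have hBalt : BI = (gen N m₀).filter (fun W => W ∉ R) := by
      ext W
      simp only [hBIdef, Finset.mem_filter, mem_gen]
      constructor
      · rintro ⟨hlen, hint⟩
        exact ⟨hlen, fun hWR => hint W hWR (List.prefix_refl W)⟩
      · rintro ⟨hlen, hWR⟩
        refine ⟨hlen, fun I hIR hpre => hWR ?_⟩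
        have h1 : I = W := by
          apply List.IsPrefix.eq_of_length hpre
          have h2 := hpre.length_le
          have h3 := hmin I hIR
          omega
        rwa [← h1]
    have hgensum : ∑ W ∈ gen N m₀, D W ^ h
        = (∑ W ∈ (gen N m₀).filter (fun W => W ∈ R), D W ^ h) + ∑ W ∈ BI, D W ^ h := by
      rw [hBalt, Finset.sum_filter_add_sum_filter_not]
    have hRsplit : ∑ I ∈ R, D I ^ h
        = (∑ I ∈ R.filter (fun I => I.length = m₀), D I ^ h)
          + ∑ I ∈ R.filter (fun I => ¬ I.length = m₀), D I ^ h :=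
      (Finset.sum_filter_add_sum_filter_not R _ _).symm
    have hEq1 : R.filter (fun I => I.length = m₀) = (gen N m₀).filter (fun W => W ∈ R) := by
      ext I
      simp only [Finset.mem_filter, mem_gen]
      tauto
    have hEq2 : R.filter (fun I => ¬ I.length = m₀)
        = BI.biUnion (fun W => R.filter (fun I => W <+: I)) := by
      ext I
      simp only [Finset.mem_filter, Finset.mem_biUnion, hBIdef, mem_gen]
      constructor
      · rintro ⟨hIR, hlen⟩
        have hgt : m₀ < I.length := lt_of_le_of_ne (hmin I hIR) (Ne.symm hlen)
        refine ⟨I.take m₀, ⟨by rw [List.length_take]; omega, ?_⟩, hIR, List.take_prefix _ _⟩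
        intro I' hI' hpre'
        have h1 : I' = I := hPF I' hI' I hIR (hpre'.trans (List.take_prefix _ _))
        have h2 := hpre'.length_le
        rw [h1, List.length_take] at h2
        omega
      · rintro ⟨W, ⟨hWlen, hint⟩, hIR, hpre⟩
        refine ⟨hIR, fun hIlen => ?_⟩
        have h1 : W = I := List.IsPrefix.eq_of_length hpre (by omega)
        apply hint I hIR
        rw [h1]
    have hdisjB : (BI : Set (List (Fin N))).PairwiseDisjoint
        (fun W => R.filter (fun I => W <+: I)) := by
      intro W hW W' hW' hne
      refine Finset.disjoint_left.mpr fun I hI hI' => ?_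
      rw [Finset.mem_filter] at hI hI'
      have hWlen : W.length = m₀ :=
        mem_gen.mp (Finset.mem_filter.mp (Finset.mem_coe.mp hW)).1
      have hW'len : W'.length = m₀ :=
        mem_gen.mp (Finset.mem_filter.mp (Finset.mem_coe.mp hW')).1
      apply hne
      have e1 := List.prefix_iff_eq_take.mp hI.2
      have e2 := List.prefix_iff_eq_take.mp hI'.2
      rw [e1, e2, hWlen, hW'len]
    have hsumlow : ∑ W ∈ gen N m₀, D W ^ h ≤ ∑ I ∈ R, D I ^ h := by
      rw [hgensum, hRsplit, hEq1, hEq2, Finset.sum_biUnion hdisjB]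
      refine add_le_add_right (Finset.sum_le_sum fun W hW => ?_) _
      have hWfacts := Finset.mem_filter.mp hW
      have hWlen : W.length = m₀ := mem_gen.mp hWfacts.1
      have hC := claimC n W (by omega) hWfacts.2
      rw [hWlen] at hC
      calc D W ^ h = D W ^ h * 1 := by ring
        _ ≤ D W ^ h * gg D h z n m₀ :=
            mul_le_mul_of_nonneg_left hgg1 (Real.rpow_pos_of_pos (hDpos W) h).le
        _ ≤ _ := hC
    have hopt2 := hopt (gen N m₀) (hgencov m₀ hm₀n)
    have hSeq : ∑ W ∈ gen N m₀, D W ^ h = ∑ I ∈ R, D I ^ h := le_antisymm hsumlow hopt2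
    have hcard2 := hcard (gen N m₀) (hgencov m₀ hm₀n) hSeq
    rw [card_gen] at hcard2
    -- counting argument
    set m₁ := (R.image List.length).max' hlensne with hm₁def
    have hmax : ∀ I ∈ R, I.length ≤ m₁ := fun I hI =>
      Finset.le_max' _ _ (Finset.mem_image_of_mem _ hI)
    have hsub : gen N m₁ ⊆ R.biUnion
        (fun I => (gen N (m₁ - I.length)).image (fun V => I ++ V)) := by
      intro W hW
      have hWlen : W.length = m₁ := mem_gen.mp hW
      obtain ⟨K, hKR, hKeq⟩ := hcov (wseq z W)
      rw [Finset.mem_biUnion]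
      refine ⟨K, hKR, ?_⟩
      rw [Finset.mem_image]
      refine ⟨W.drop K.length, mem_gen.mpr (by simp [hWlen]), ?_⟩
      have h1 : K = W.take K.length := by
        conv_lhs => rw [hKeq]
        exact pref_wseq z W (by rw [hWlen]; exact hmax K hKR)
      exact (congrArg (· ++ W.drop K.length) h1).trans (List.take_append_drop _ _)
    have hcount : N ^ m₁ < R.card * N ^ (m₁ - m₀) := by
      have h1 : (gen N m₁).card
          ≤ ∑ I ∈ R, ((gen N (m₁ - I.length)).image (fun V => I ++ V)).card :=
        le_trans (Finset.card_le_card hsub) Finset.card_biUnion_le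
      have h2 : ∀ I ∈ R, ((gen N (m₁ - I.length)).image (fun V => I ++ V)).card
          ≤ N ^ (m₁ - I.length) := by
        intro I hI
        calc ((gen N (m₁ - I.length)).image (fun V => I ++ V)).card
            ≤ (gen N (m₁ - I.length)).card := Finset.card_image_le
          _ = N ^ (m₁ - I.length) := card_gen N _
      have h4 : ∑ I ∈ R, N ^ (m₁ - I.length) < ∑ _I ∈ R, N ^ (m₁ - m₀) := by
        apply Finset.sum_lt_sum
        · intro i hi
          exact Nat.pow_le_pow_right (by omega)
            (by have := hmin i hi; have := hmax i hi; omega)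
        · refine ⟨I₁, hI₁R, ?_⟩
          exact Nat.pow_lt_pow_right (by omega)
            (by have := hmax I₁ hI₁R; omega)
      calc N ^ m₁ = (gen N m₁).card := (card_gen N m₁).symm
        _ ≤ ∑ I ∈ R, ((gen N (m₁ - I.length)).image (fun V => I ++ V)).card := h1
        _ ≤ ∑ I ∈ R, N ^ (m₁ - I.length) := Finset.sum_le_sum h2
        _ < ∑ _I ∈ R, N ^ (m₁ - m₀) := h4
        _ = R.card * N ^ (m₁ - m₀) := by rw [Finset.sum_const, smul_eq_mul]
    have hm₀m₁ : m₀ ≤ m₁ := le_trans (le_of_lt hI₁gt) (hmax I₁ hI₁R)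
    have hfin : R.card * N ^ (m₁ - m₀) ≤ N ^ m₀ * N ^ (m₁ - m₀) :=
      Nat.mul_le_mul_right _ hcard2
    rw [← pow_add, show m₀ + (m₁ - m₀) = m₁ by omega] at hfin
    omega
  -- conclude : R is the full generation m₀
  refine ⟨m₀, hm₀n, ?_⟩
  apply Finset.ext
  intro W
  show W ∈ R ↔ W ∈ gen N m₀
  rw [mem_gen]
  constructor
  · exact hall W
  · intro hW
    obtain ⟨K, hKR, hKeq⟩ := hcov (wseq z W)
    have hKlen : K.length = m₀ := hall K hKR
    have h1 : K = pref (wseq z W) m₀ := by rw [← hKlen]; exact hKeq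
    rw [pref_wseq z W hW.ge] at h1
    have h2 : K = W := by rw [h1, ← hW, List.take_length]
    rwa [← h2]
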